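/- arXiv:1602.07860 — 7 statements merged into one kernel-verified Lean document; each statement's English description precedes it below -/
import Mathlib

section
/- If F : 2^X → ℝ is non-negative, monotone, and submodular on a finite ground set X, and A^G is the set of size k produced by greedy maximization (iteratively adding the element of maximal marginal gain), then F(A^G) ≥ (1 - 1/e) · F(A*), where A* maximizes F over all subsets of size at most k. -/
open Finset

/-- Nemhauser et al.'s (1 - 1/e) guarantee for greedy maximization of a
non-negative, monotone, submodular set function under a cardinality constraint. -/
theorem pac_stmt_0 {X : Type*} [Fintype X] [DecidableEq X]
    (F : Finset X → ℝ)
    (hnonneg : ∀ A : Finset X, 0 ≤ F A)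
    (hmono : ∀ A B : Finset X, A ⊆ B → F A ≤ F B)
    (hsub : ∀ A B : Finset X, A ⊆ B → ∀ i ∉ B,
      F (insert i B) - F B ≤ F (insert i A) - F A)
    (k : ℕ) (hk : 1 ≤ k)
    (A : ℕ → Finset X) (h0 : A 0 = ∅)
    (hgreedy : ∀ m < k, ∃ i ∉ A m, A (m + 1) = insert i (A m) ∧
      ∀ j ∉ A m, F (insert j (A m)) - F (A m) ≤ F (insert i (A m)) - F (A m))
    (Astar : Finset X) (hcard : Astar.card ≤ k)
    (hopt : ∀ B : Finset X, B.card ≤ k → F B ≤ F Astar) :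
    F (A k) ≥ (1 - (Real.exp 1)⁻¹) * F Astar := by
  have hk0 : (0:ℝ) < (k:ℝ) := by exact_mod_cast hk
  set c : ℝ := 1 - 1/(k:ℝ) with hc
  have hc0 : 0 ≤ c := by
    have : 1/(k:ℝ) ≤ 1 := by
      rw [div_le_one hk0]; exact_mod_cast hk
    simp only [hc]; linarith
  -- Per-step inequality
  have key : ∀ m < k, F Astar - F (A (m+1)) ≤ c * (F Astar - F (A m)) := by
    intro m hm
    obtain ⟨i, hi, hA1, hmax⟩ := hgreedy m hm
    set δ : ℝ := F (insert i (A m)) - F (A m) with hδ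
    have hδ0 : 0 ≤ δ := sub_nonneg.2 (hmono _ _ (subset_insert _ _))
    have hsum : ∀ S : Finset X, F (A m ∪ S) ≤ F (A m) + S.card * δ := by
      intro S
      induction S using Finset.induction with
      | empty => simp
      | @insert j S' hj ih =>
        have hins : A m ∪ insert j S' = insert j (A m ∪ S') := by
          ext x; simp [or_left_comm, or_comm]
        rw [hins]
        have hstep : F (insert j (A m ∪ S')) ≤ F (A m ∪ S') + δ := by
          by_cases hjm : j ∈ A m ∪ S'
          · rw [Finset.insert_eq_self.2 hjm]; linarith
          · have h1 := hsub (A m) (A m ∪ S') Finset.subset_union_left j hjm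
            have hjA : j ∉ A m := fun h => hjm (Finset.mem_union_left _ h)
            have h2 := hmax j hjA
            linarith
        have hcard' : (insert j S').card = S'.card + 1 := Finset.card_insert_of_notMem hj
        rw [hcard']
        push_cast
        nlinarith [hδ0]
    have h1 : F Astar ≤ F (A m) + (k:ℝ) * δ := by
      calc F Astar ≤ F (A m ∪ Astar) := hmono _ _ Finset.subset_union_right
        _ ≤ F (A m) + Astar.card * δ := hsum Astar
        _ ≤ F (A m) + (k:ℝ) * δ := by
            have : (Astar.card : ℝ) ≤ (k:ℝ) := by exact_mod_cast hcard
            nlinarith [hδ0]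
    rw [hA1]
    have hdiv : (F Astar - F (A m)) / (k:ℝ) ≤ δ := by
      rw [div_le_iff₀ hk0]; linarith [h1]
    calc F Astar - F (insert i (A m)) = (F Astar - F (A m)) - δ := by rw [hδ]; ring
      _ ≤ (F Astar - F (A m)) - (F Astar - F (A m)) / (k:ℝ) := by linarith
      _ = c * (F Astar - F (A m)) := by rw [hc]; ring
  -- Geometric decay
  have main : ∀ m, m ≤ k → F Astar - F (A m) ≤ c^m * (F Astar - F (A 0)) := by
    intro m
    induction m with
    | zero => intro _; simp
    | succ n ih =>
      intro hn
      have hn' : n ≤ k := Nat.le_of_succ_le hn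
      have h1 := key n (Nat.lt_of_succ_le hn)
      have h2 := ih hn'
      calc F Astar - F (A (n+1)) ≤ c * (F Astar - F (A n)) := h1
        _ ≤ c * (c^n * (F Astar - F (A 0))) := by
            exact mul_le_mul_of_nonneg_left h2 hc0
        _ = c^(n+1) * (F Astar - F (A 0)) := by ring
  have hmain := main k le_rfl
  have hg0 : F Astar - F (A 0) ≤ F Astar := by
    have := hnonneg (A 0); linarith
  have hck_exp : c^k ≤ (Real.exp 1)⁻¹ := by
    have h1 : c ≤ Real.exp (-(1/(k:ℝ))) := by
      have := Real.add_one_le_exp (-(1/(k:ℝ)))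
      linarith
    have h2 : c^k ≤ (Real.exp (-(1/(k:ℝ))))^k := pow_le_pow_left₀ hc0 h1 k
    have h3 : (Real.exp (-(1/(k:ℝ))))^k = Real.exp ((k:ℝ) * (-(1/(k:ℝ)))) := by
      rw [← Real.exp_nat_mul]
    have h4 : (k:ℝ) * (-(1/(k:ℝ))) = -1 := by
      field_simp
    rw [h3, h4] at h2
    rwa [Real.exp_neg] at h2
  have hckn : 0 ≤ c^k := pow_nonneg hc0 k
  have hfin : F Astar - F (A k) ≤ (Real.exp 1)⁻¹ * F Astar := by
    calc F Astar - F (A k) ≤ c^k * (F Astar - F (A 0)) := hmain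
      _ ≤ c^k * F Astar := mul_le_mul_of_nonneg_left hg0 hckn
      _ ≤ (Real.exp 1)⁻¹ * F Astar := mul_le_mul_of_nonneg_right hck_exp (hnonneg Astar)
  nlinarith [hfin]
end

section
/- Let F be submodular and let A be a subset. If an element i^P satisfies F(A ∪ {i^P}) > F(A ∪ {i*}) - ε₁ where i* maximizes the marginal gain Δ_F(i|A) over i ∈ X \ A, then Δ_F(i^P|A) ≥ (1/k) · Σ_{i ∈ A* \ A} Δ_F(i|A) - ε₁ for any set A* with |A*| ≤ k. -/
open Finset

/-- deterministic core of Lemma 1: if `iP` is an ε₁-approximate greedy choice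
(its value is within ε₁ of the exact greedy choice `istar`), then its marginal gain is at
least the average marginal gain of the elements of any set `Astar` of size at most `k`,
minus ε₁. -/
theorem pac_stmt_1 {X : Type*} [Fintype X] [DecidableEq X]
    (F : Finset X → ℝ)
    (hmono : ∀ A B : Finset X, A ⊆ B → F A ≤ F B)
    (hsub : ∀ A B : Finset X, A ⊆ B → ∀ i ∉ B,
      F (insert i B) - F B ≤ F (insert i A) - F A)
    (A : Finset X) (k : ℕ) (hk : 1 ≤ k)
    (istar : X) (histar : istar ∉ A)
    (hmax : ∀ j ∉ A, F (insert j A) - F A ≤ F (insert istar A) - F A)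
    (iP : X) (ε₁ : ℝ)
    (hP : F (insert iP A) > F (insert istar A) - ε₁)
    (Astar : Finset X) (hcard : Astar.card ≤ k) :
    F (insert iP A) - F A ≥
      (1 / (k : ℝ)) * ∑ i ∈ Astar \ A, (F (insert i A) - F A) - ε₁ := by
  set D := F (insert istar A) - F A with hD
  have hD0 : 0 ≤ D := by
    have := hmono A (insert istar A) (subset_insert _ _)
    linarith
  have hsum : ∑ i ∈ Astar \ A, (F (insert i A) - F A) ≤ ((Astar \ A).card : ℝ) * D := by
    calc ∑ i ∈ Astar \ A, (F (insert i A) - F A)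
        ≤ ∑ _i ∈ Astar \ A, D := by
          apply Finset.sum_le_sum
          intro i hi
          exact hmax i (by simpa using (Finset.mem_sdiff.mp hi).2)
      _ = ((Astar \ A).card : ℝ) * D := by
          rw [Finset.sum_const, nsmul_eq_mul]
  have hcard' : ((Astar \ A).card : ℝ) ≤ (k : ℝ) := by
    have : (Astar \ A).card ≤ k := le_trans (Finset.card_le_card (Finset.sdiff_subset)) hcard
    exact_mod_cast this
  have hk' : (0 : ℝ) < (k : ℝ) := by exact_mod_cast hk
  have hsum2 : ∑ i ∈ Astar \ A, (F (insert i A) - F A) ≤ (k : ℝ) * D := by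
    calc ∑ i ∈ Astar \ A, (F (insert i A) - F A) ≤ ((Astar \ A).card : ℝ) * D := hsum
      _ ≤ (k : ℝ) * D := by nlinarith
  have hdiv : (1 / (k : ℝ)) * ∑ i ∈ Astar \ A, (F (insert i A) - F A) ≤ D := by
    rw [div_mul_eq_mul_div, one_mul, div_le_iff₀ hk']
    linarith [hsum2]
  linarith
end

section
/- Let F be monotone and submodular, A* a set of size at most k, and A_m any set. Then F(A_m) + Σ_{i ∈ A* \ A_m} Δ_F(i|A_m) ≥ F(A*), where Δ_F(i|A) = F(A ∪ {i}) - F(A). -/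
open Finset

theorem pac_aux {X : Type*} [Fintype X] [DecidableEq X]
    (F : Finset X → ℝ)
    (hsub : ∀ A B : Finset X, A ⊆ B → ∀ i ∉ B,
      F (insert i B) - F B ≤ F (insert i A) - F A)
    (Am : Finset X) :
    ∀ S : Finset X, F (Am ∪ S) ≤ F Am + ∑ i ∈ S \ Am, (F (insert i Am) - F Am) := by
  intro S
  induction S using Finset.induction_on with
  | empty => simp
  | @insert a S ha ih =>
    by_cases haM : a ∈ Am
    · have h1 : Am ∪ insert a S = Am ∪ S := by
        rw [Finset.union_insert, Finset.insert_eq_self.mpr (Finset.mem_union_left _ haM)]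
      have h2 : insert a S \ Am = S \ Am := by
        ext x
        simp only [Finset.mem_sdiff, Finset.mem_insert]
        constructor
        · rintro ⟨rfl | hx, hxm⟩
          · exact absurd haM hxm
          · exact ⟨hx, hxm⟩
        · rintro ⟨hx, hxm⟩; exact ⟨Or.inr hx, hxm⟩
      rw [h1, h2]; exact ih
    · have h2 : insert a S \ Am = insert a (S \ Am) := by
        ext x
        simp only [Finset.mem_sdiff, Finset.mem_insert]
        constructor
        · rintro ⟨rfl | hx, hxm⟩
          · exact Or.inl rfl
          · exact Or.inr ⟨hx, hxm⟩
        · rintro (rfl | ⟨hx, hxm⟩)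
          · exact ⟨Or.inl rfl, haM⟩
          · exact ⟨Or.inr hx, hxm⟩
      rw [h2, Finset.sum_insert (by simp [ha])]
      rw [Finset.union_insert]
      by_cases haU : a ∈ Am ∪ S
      · exact absurd ((Finset.mem_union.mp haU).resolve_left haM) ha
      · have := hsub Am (Am ∪ S) (Finset.subset_union_left) a haU
        linarith [ih]

/-- for monotone submodular `F`, `F(A_m)` plus the sum of marginal gains of
the elements of `A* \ A_m` with respect to `A_m` is at least `F(A*)`. -/
theorem pac_stmt_2 {X : Type*} [Fintype X] [DecidableEq X]
    (F : Finset X → ℝ)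
    (hmono : ∀ A B : Finset X, A ⊆ B → F A ≤ F B)
    (hsub : ∀ A B : Finset X, A ⊆ B → ∀ i ∉ B,
      F (insert i B) - F B ≤ F (insert i A) - F A)
    (k : ℕ) (Astar : Finset X) (hcard : Astar.card ≤ k)
    (Am : Finset X) :
    F Am + ∑ i ∈ Astar \ Am, (F (insert i Am) - F Am) ≥ F Astar := by
  have h1 := pac_aux F hsub Am Astar
  have h2 := hmono Astar (Am ∪ Astar) Finset.subset_union_right
  linarith
end

section
/- Suppose a sequence of sets A_0 = ∅ ⊆ A_1 ⊆ ... ⊆ A_k (with A_{m+1} = A_m ∪ {i_{m+1}}) satisfies, for every m < k, F(A_{m+1}) - F(A_m) ≥ (1/k)·[F(A*) - F(A_m)] - ε₁, and F(∅) ≥ 0. Then F(A_k) ≥ (1 - (1 - 1/k)^k)·F(A*) - k·ε₁ ≥ (1 - 1/e)·F(A*) - k·ε₁. -/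
open Finset

/-- the inductive argument of Theorem 2: if each step improves `F` by at least
`(1/k)[F(A*) - F(A_m)] - ε₁`, then `F(A_k) ≥ (1 - (1 - 1/k)^k) F(A*) - k ε₁
≥ (1 - 1/e) F(A*) - k ε₁`. -/
theorem pac_stmt_3 {X : Type*} [Fintype X] [DecidableEq X]
    (F : Finset X → ℝ) (Astar : Finset X)
    (k : ℕ) (hk : 1 ≤ k) (ε₁ : ℝ) (hε : 0 ≤ ε₁)
    (A : ℕ → Finset X) (h0 : A 0 = ∅)
    (hchain : ∀ m < k, ∃ i, A (m + 1) = insert i (A m))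
    (hstep : ∀ m < k,
      F (A (m + 1)) - F (A m) ≥ (1 / (k : ℝ)) * (F Astar - F (A m)) - ε₁)
    (hF0 : 0 ≤ F ∅) (hFstar : 0 ≤ F Astar) :
    F (A k) ≥ (1 - (1 - 1 / (k : ℝ)) ^ k) * F Astar - (k : ℝ) * ε₁ ∧
      (1 - (1 - 1 / (k : ℝ)) ^ k) * F Astar - (k : ℝ) * ε₁ ≥
        (1 - (Real.exp 1)⁻¹) * F Astar - (k : ℝ) * ε₁ := by
  have hk0 : (0:ℝ) < k := by exact_mod_cast hk
  have hkinv : 1 / (k:ℝ) ≤ 1 := by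
    rw [div_le_one hk0]; exact_mod_cast hk
  have hq0 : (0:ℝ) ≤ 1 - 1 / (k:ℝ) := by linarith
  have hinv : (0:ℝ) < 1 / (k:ℝ) := by positivity
  have main : ∀ m ≤ k, F (A m) ≥ (1 - (1 - 1 / (k : ℝ)) ^ m) * F Astar - (m : ℝ) * ε₁ := by
    intro m
    induction m with
    | zero => intro _; simp [h0]; linarith
    | succ n ih =>
      intro hle
      have hn : n < k := Nat.lt_of_succ_le hle
      have IH := ih (le_of_lt hn)
      have hs := hstep n hn
      have hpow : (1 - 1 / (k:ℝ)) ^ n ≤ 1 := pow_le_one₀ hq0 (by linarith)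
      have key : F (A (n+1)) ≥ (1 - 1/(k:ℝ)) * F (A n) + (1/(k:ℝ)) * F Astar - ε₁ := by
        linarith
      have h2 : (1 - 1/(k:ℝ)) * F (A n) ≥
          (1 - 1/(k:ℝ)) * ((1 - (1 - 1 / (k:ℝ)) ^ n) * F Astar - (n:ℝ) * ε₁) :=
        mul_le_mul_of_nonneg_left IH hq0
      have hnε : (1 - 1/(k:ℝ)) * ((n:ℝ) * ε₁) ≤ (n:ℝ) * ε₁ := by
        nlinarith [mul_nonneg (Nat.cast_nonneg (α := ℝ) n) hε, hinv.le]
      push_cast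
      nlinarith [pow_succ (1 - 1/(k:ℝ)) n]
  refine ⟨main k le_rfl, ?_⟩
  have h1 : 1 - 1/(k:ℝ) ≤ Real.exp (-(1/(k:ℝ))) := by
    have := Real.add_one_le_exp (-(1/(k:ℝ))); linarith
  have h2 : (1 - 1/(k:ℝ)) ^ k ≤ Real.exp (-(1/(k:ℝ))) ^ k :=
    pow_le_pow_left₀ hq0 h1 k
  have h3 : Real.exp (-(1/(k:ℝ))) ^ k = Real.exp (-1) := by
    rw [← Real.exp_nat_mul]
    congr 1
    field_simp
  have h4 : (1 - 1/(k:ℝ)) ^ k ≤ (Real.exp 1)⁻¹ := by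
    rw [← Real.exp_neg]; linarith [h2, h3.le]
  have := mul_le_mul_of_nonneg_right (by linarith : 1 - (Real.exp 1)⁻¹ ≤ 1 - (1 - 1/(k:ℝ))^k) hFstar
  linarith
end

section
/- Lower bound on plug-in entropy estimator bias: for a distribution b with support size ψ on a finite set, and M i.i.d. samples, E[H(b̂)] - H(b) ≥ -log(1 + (ψ - 1)/M). -/
open Finset

/-- Shannon entropy (natural log) of a pmf on a finite set. -/
noncomputable def shannonEntropy {S : Type*} [Fintype S] (p : S → ℝ) : ℝ :=
  - ∑ s, p s * Real.log (p s)

/-- Empirical (maximum likelihood) distribution of `M` samples `ω : Fin M → S`. -/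
noncomputable def empDist {S : Type*} [Fintype S] [DecidableEq S] {M : ℕ}
    (ω : Fin M → S) (s : S) : ℝ :=
  (1 / (M : ℝ)) * ∑ j, if ω j = s then 1 else 0

lemma sum_prod_eq {S : Type*} [Fintype S] {M : ℕ} (f : Fin M → S → ℝ) :
    ∑ ω : Fin M → S, ∏ j, f j (ω j) = ∏ j, ∑ x, f j x := by
  rw [Finset.prod_univ_sum, ← Fintype.piFinset_univ]

lemma exp_ind {S : Type*} [Fintype S] [DecidableEq S] {M : ℕ}
    (b : S → ℝ) (hb1 : ∑ s, b s = 1) (j : Fin M) (s : S) :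
    ∑ ω : Fin M → S, (∏ k, b (ω k)) * (if ω j = s then (1:ℝ) else 0) = b s := by
  have h1 : ∀ ω : Fin M → S, (∏ k, b (ω k)) * (if ω j = s then (1:ℝ) else 0)
      = ∏ k, (b (ω k) * if k = j then (if ω k = s then (1:ℝ) else 0) else 1) := by
    intro ω
    rw [Finset.prod_mul_distrib, Finset.prod_ite_eq' Finset.univ j
      (fun k => if ω k = s then (1:ℝ) else 0)]
    simp
  simp_rw [h1]
  rw [sum_prod_eq fun k x => b x * if k = j then (if x = s then (1:ℝ) else 0) else 1]
  have h2 : ∀ k : Fin M,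
      (∑ x, b x * if k = j then (if x = s then (1:ℝ) else 0) else 1) = if k = j then b s else 1 := by
    intro k
    by_cases h : k = j <;> simp [h, hb1, mul_ite, Finset.sum_ite_eq']
  simp_rw [h2]
  rw [Finset.prod_ite_eq' Finset.univ j (fun _ => b s)]
  simp

lemma exp_ind2 {S : Type*} [Fintype S] [DecidableEq S] {M : ℕ}
    (b : S → ℝ) (hb1 : ∑ s, b s = 1) {j k : Fin M} (hjk : j ≠ k) (s : S) :
    ∑ ω : Fin M → S, (∏ i, b (ω i)) * ((if ω j = s then (1:ℝ) else 0) *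
      (if ω k = s then (1:ℝ) else 0)) = b s * b s := by
  have h1 : ∀ ω : Fin M → S, (∏ i, b (ω i)) * ((if ω j = s then (1:ℝ) else 0) *
      (if ω k = s then (1:ℝ) else 0))
      = ∏ i, (b (ω i) * ((if i = j then (if ω i = s then (1:ℝ) else 0) else 1) *
        (if i = k then (if ω i = s then (1:ℝ) else 0) else 1))) := by
    intro ω
    rw [Finset.prod_mul_distrib, Finset.prod_mul_distrib,
      Finset.prod_ite_eq' Finset.univ j (fun i => if ω i = s then (1:ℝ) else 0),
      Finset.prod_ite_eq' Finset.univ k (fun i => if ω i = s then (1:ℝ) else 0)]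
    simp
  simp_rw [h1]
  rw [sum_prod_eq fun i x => b x * ((if i = j then (if x = s then (1:ℝ) else 0) else 1) *
    (if i = k then (if x = s then (1:ℝ) else 0) else 1))]
  have h2 : ∀ i : Fin M,
      (∑ x, b x * ((if i = j then (if x = s then (1:ℝ) else 0) else 1) *
        (if i = k then (if x = s then (1:ℝ) else 0) else 1)))
      = (if i = j then b s else 1) * (if i = k then b s else 1) := by
    intro i
    by_cases h : i = j
    · subst h
      simp [hjk, mul_ite, Finset.sum_ite_eq']
    · by_cases h' : i = k <;> simp [h, h', hjk.symm, hb1, mul_ite, Finset.sum_ite_eq']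
  simp_rw [h2]
  rw [Finset.prod_mul_distrib,
    Finset.prod_ite_eq' Finset.univ j (fun _ => b s),
    Finset.prod_ite_eq' Finset.univ k (fun _ => b s)]
  simp

lemma exp_emp {S : Type*} [Fintype S] [DecidableEq S] {M : ℕ}
    (b : S → ℝ) (hb1 : ∑ s, b s = 1) (hM : 1 ≤ M) (s : S) :
    ∑ ω : Fin M → S, (∏ k, b (ω k)) * empDist ω s = b s := by
  have hM0 : (M:ℝ) ≠ 0 := by positivity
  have h1 : ∀ ω : Fin M → S, (∏ k, b (ω k)) * empDist ω s
      = (1/(M:ℝ)) * ∑ j, (∏ k, b (ω k)) * (if ω j = s then (1:ℝ) else 0) := by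
    intro ω
    rw [empDist, ← Finset.mul_sum, ← mul_assoc, mul_comm (∏ k, b (ω k)) (1/(M:ℝ)), mul_assoc]
  simp_rw [h1]
  rw [← Finset.mul_sum, Finset.sum_comm]
  simp_rw [fun j => exp_ind b hb1 j s]
  rw [Finset.sum_const, card_univ, Fintype.card_fin, nsmul_eq_mul]
  field_simp

lemma exp_emp_sq {S : Type*} [Fintype S] [DecidableEq S] {M : ℕ}
    (b : S → ℝ) (hb1 : ∑ s, b s = 1) (hM : 1 ≤ M) (s : S) :
    ∑ ω : Fin M → S, (∏ k, b (ω k)) * (empDist ω s)^2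
      = (b s + ((M:ℝ) - 1) * (b s * b s)) / M := by
  have hM0 : (M:ℝ) ≠ 0 := by positivity
  have hsq : ∀ ω : Fin M → S, (∏ k, b (ω k)) * (empDist ω s)^2
      = ∑ j, ∑ k, (1/(M:ℝ))^2 * ((∏ i, b (ω i)) *
        ((if ω j = s then (1:ℝ) else 0) * (if ω k = s then (1:ℝ) else 0))) := by
    intro ω
    rw [empDist, mul_pow, pow_two (∑ j, if ω j = s then (1:ℝ) else 0), Finset.sum_mul_sum]
    rw [Finset.mul_sum, Finset.mul_sum]
    refine Finset.sum_congr rfl fun j _ => ?_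
    rw [Finset.mul_sum, Finset.mul_sum]
    refine Finset.sum_congr rfl fun k _ => ?_
    ring
  simp_rw [hsq]
  rw [Finset.sum_comm]
  have h2 : ∀ j : Fin M, ∑ k : Fin M, ∑ ω : Fin M → S, (1/(M:ℝ))^2 * ((∏ i, b (ω i)) *
      ((if ω j = s then (1:ℝ) else 0) * (if ω k = s then (1:ℝ) else 0)))
      = ∑ k : Fin M, (1/(M:ℝ))^2 * (if j = k then b s else b s * b s) := by
    intro j
    refine Finset.sum_congr rfl fun k _ => ?_
    rw [← Finset.mul_sum]
    congr 1
    by_cases h : j = k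
    · subst h
      simp only [if_pos rfl]
      have : ∀ ω : Fin M → S, (if ω j = s then (1:ℝ) else 0) * (if ω j = s then (1:ℝ) else 0)
          = (if ω j = s then (1:ℝ) else 0) := by intro ω; split <;> ring
      simp_rw [this]
      simp only [if_true]
      exact exp_ind b hb1 j s
    · rw [if_neg h]
      exact exp_ind2 b hb1 h s
  have h3 : ∑ j : Fin M, ∑ ω : Fin M → S, ∑ k : Fin M, (1/(M:ℝ))^2 * ((∏ i, b (ω i)) *
      ((if ω j = s then (1:ℝ) else 0) * (if ω k = s then (1:ℝ) else 0)))
      = ∑ j : Fin M, ∑ k : Fin M, (1/(M:ℝ))^2 * (if j = k then b s else b s * b s) := by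
    refine Finset.sum_congr rfl fun j _ => ?_
    rw [Finset.sum_comm]
    exact h2 j
  rw [h3]
  have hsplit : ∀ j k : Fin M, (1/(M:ℝ))^2 * (if j = k then b s else b s * b s)
      = (1/(M:ℝ))^2 * (b s * b s) + (if j = k then (1/(M:ℝ))^2 * (b s - b s * b s) else 0) := by
    intro j k; split <;> ring
  simp_rw [hsplit, Finset.sum_add_distrib, Finset.sum_ite_eq, Finset.mem_univ, if_pos,
    Finset.sum_const, card_univ, Fintype.card_fin, nsmul_eq_mul]
  field_simp
  ring

lemma emp_nonneg {S : Type*} [Fintype S] [DecidableEq S] {M : ℕ}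
    (ω : Fin M → S) (s : S) : 0 ≤ empDist ω s := by
  unfold empDist
  positivity

lemma emp_sum_one {S : Type*} [Fintype S] [DecidableEq S] {M : ℕ}
    (hM : 1 ≤ M) (ω : Fin M → S) : ∑ s, empDist ω s = 1 := by
  have hM0 : (M:ℝ) ≠ 0 := by positivity
  simp_rw [empDist, ← Finset.mul_sum]
  rw [Finset.sum_comm]
  simp [Finset.sum_ite_eq, hM0]

lemma emp_vanish {S : Type*} [Fintype S] [DecidableEq S] {M : ℕ}
    {b : S → ℝ} {ω : Fin M → S} (hp : (∏ j, b (ω j)) ≠ 0) {s : S} (hbs : b s = 0) :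
    empDist ω s = 0 := by
  rw [empDist]
  convert mul_zero _
  refine Finset.sum_eq_zero fun j _ => ?_
  rw [if_neg]
  intro h
  exact hp (Finset.prod_eq_zero (Finset.mem_univ j) (h ▸ hbs))

lemma sum_p_one {S : Type*} [Fintype S] {M : ℕ}
    (b : S → ℝ) (hb1 : ∑ s, b s = 1) :
    ∑ ω : Fin M → S, ∏ j, b (ω j) = 1 := by
  rw [sum_prod_eq fun _ x => b x]
  simp [hb1]

/-- Paninski's lower bound on the bias of the plug-in entropy estimator:
`E[H(b̂)] - H(b) ≥ -log(1 + (ψ - 1)/M)` where `ψ` is the support size of `b`. -/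
theorem pac_stmt_7 {S : Type*} [Fintype S] [DecidableEq S]
    (b : S → ℝ) (hb : ∀ s, 0 ≤ b s) (hb1 : ∑ s, b s = 1)
    (M : ℕ) (hM : 1 ≤ M)
    (ψ : ℕ) (hψ : ψ = (Finset.univ.filter fun s => 0 < b s).card) :
    ∑ ω : Fin M → S, (∏ j, b (ω j)) * shannonEntropy (empDist ω) - shannonEntropy b ≥
      - Real.log (1 + ((ψ : ℝ) - 1) / (M : ℝ)) := by
  classical
  have hM0 : (0:ℝ) < M := by
    have : 0 < M := hM
    exact_mod_cast this
  set T : ℝ := 1 + ((ψ : ℝ) - 1) / (M : ℝ) with hTdef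
  have hψ1 : 1 ≤ ψ := by
    rw [hψ]
    refine Finset.card_pos.mpr ?_
    have hex : ∃ s, 0 < b s := by
      by_contra h
      push_neg at h
      have h0 : ∑ s, b s = 0 := Finset.sum_eq_zero fun s _ => le_antisymm (h s) (hb s)
      rw [hb1] at h0
      norm_num at h0
    obtain ⟨s, hs⟩ := hex
    exact ⟨s, Finset.mem_filter.mpr ⟨Finset.mem_univ s, hs⟩⟩
  have hT1 : (1:ℝ) ≤ T := by
    have h1 : (0:ℝ) ≤ ((ψ:ℝ) - 1) / M := by
      apply div_nonneg _ hM0.le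
      have : (1:ℝ) ≤ (ψ:ℝ) := by exact_mod_cast hψ1
      linarith
    simp only [hTdef]
    linarith
  have hT0 : (0:ℝ) < T := lt_of_lt_of_le one_pos hT1
  have hsupp_sum : ∑ s ∈ Finset.univ.filter (fun s => 0 < b s), b s = 1 := by
    rw [← hb1]
    apply Finset.sum_filter_of_ne
    intro x _ hx
    exact lt_of_le_of_ne (hb x) (Ne.symm hx)
  -- E[∑_s b̂_s²/b_s] = T
  have hE : ∑ ω : Fin M → S, (∏ j, b (ω j)) * (∑ s, (empDist ω s)^2 / b s) = T := by
    have h1 : ∀ ω : Fin M → S, (∏ j, b (ω j)) * (∑ s, (empDist ω s)^2 / b s)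
        = ∑ s, ((∏ j, b (ω j)) * (empDist ω s)^2) / b s := by
      intro ω
      rw [Finset.mul_sum]
      exact Finset.sum_congr rfl fun s _ => (mul_div_assoc _ _ _).symm
    simp_rw [h1]
    rw [Finset.sum_comm]
    have h2 : ∀ s : S, ∑ ω : Fin M → S, ((∏ j, b (ω j)) * (empDist ω s)^2) / b s
        = ((b s + ((M:ℝ) - 1) * (b s * b s)) / M) / b s := by
      intro s
      rw [← Finset.sum_div, exp_emp_sq b hb1 hM s]
    simp_rw [h2]
    rw [← Finset.sum_filter_of_ne (p := fun s => 0 < b s)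
      (fun x _ hx => by
        by_contra hbx
        have hbx0 : b x = 0 := le_antisymm (not_lt.mp hbx) (hb x)
        apply hx
        rw [hbx0]
        simp)]
    have h3 : ∀ s ∈ Finset.univ.filter (fun s => 0 < b s),
        ((b s + ((M:ℝ) - 1) * (b s * b s)) / M) / b s = 1/(M:ℝ) + (((M:ℝ)-1)/M) * b s := by
      intro s hs
      have hbs : 0 < b s := (Finset.mem_filter.mp hs).2
      field_simp
    rw [Finset.sum_congr rfl h3, Finset.sum_add_distrib, Finset.sum_const, ← Finset.mul_sum,
      hsupp_sum, ← hψ, nsmul_eq_mul]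
    simp only [hTdef]
    field_simp
    ring
  -- bias identity
  have hkey : ∑ ω : Fin M → S, (∏ j, b (ω j)) * (∑ s, empDist ω s * Real.log (b s))
      = ∑ s, b s * Real.log (b s) := by
    have h1 : ∀ ω : Fin M → S, (∏ j, b (ω j)) * (∑ s, empDist ω s * Real.log (b s))
        = ∑ s, ((∏ j, b (ω j)) * empDist ω s) * Real.log (b s) := by
      intro ω
      rw [Finset.mul_sum]
      exact Finset.sum_congr rfl fun s _ => (mul_assoc _ _ _).symm
    simp_rw [h1]
    rw [Finset.sum_comm]
    refine Finset.sum_congr rfl fun s _ => ?_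
    rw [← Finset.sum_mul, exp_emp b hb1 hM s]
  have hbias : ∑ ω : Fin M → S, (∏ j, b (ω j)) * shannonEntropy (empDist ω) - shannonEntropy b
      = - ∑ ω : Fin M → S, (∏ j, b (ω j)) *
          (∑ s, empDist ω s * (Real.log (empDist ω s) - Real.log (b s))) := by
    have h1 : ∀ ω : Fin M → S, (∏ j, b (ω j)) *
        (∑ s, empDist ω s * (Real.log (empDist ω s) - Real.log (b s)))
        = (∏ j, b (ω j)) * (∑ s, empDist ω s * Real.log (empDist ω s))
          - (∏ j, b (ω j)) * (∑ s, empDist ω s * Real.log (b s)) := by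
      intro ω
      rw [← mul_sub, ← Finset.sum_sub_distrib]
      congr 1
      exact Finset.sum_congr rfl fun s _ => by ring
    simp_rw [h1, Finset.sum_sub_distrib, hkey]
    unfold shannonEntropy
    simp_rw [mul_neg]
    rw [Finset.sum_neg_distrib]
    ring
  rw [ge_iff_le, hbias, neg_le_neg_iff]
  -- termwise bound
  have hterm : ∀ (ω : Fin M → S) (s : S),
      (∏ j, b (ω j)) * (empDist ω s * (Real.log (empDist ω s) - Real.log (b s)))
      ≤ ((∏ j, b (ω j)) * empDist ω s) * Real.log T
        + ((∏ j, b (ω j)) * ((empDist ω s)^2 / b s)) / T - (∏ j, b (ω j)) * empDist ω s := by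
    intro ω s
    by_cases hp : (∏ j, b (ω j)) = 0
    · simp [hp]
    · have hppos : 0 < ∏ j, b (ω j) :=
        lt_of_le_of_ne (Finset.prod_nonneg fun j _ => hb (ω j)) (Ne.symm hp)
      rcases eq_or_lt_of_le (emp_nonneg ω s) with he | he
      · rw [← he]
        simp
      · have hbs : 0 < b s := by
          rcases eq_or_lt_of_le (hb s) with h0 | h0
          · exfalso
            have := emp_vanish hp h0.symm
            rw [this] at he
            exact lt_irrefl _ he
          · exact h0
        have hx : 0 < empDist ω s / (b s * T) := by positivity
        have hlog := Real.log_le_sub_one_of_pos hx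
        rw [Real.log_div (ne_of_gt he) (by positivity), Real.log_mul (ne_of_gt hbs) (ne_of_gt hT0)]
          at hlog
        have hmul : 0 ≤ (∏ j, b (ω j)) * empDist ω s := by positivity
        have h2 := mul_le_mul_of_nonneg_left hlog hmul
        calc (∏ j, b (ω j)) * (empDist ω s * (Real.log (empDist ω s) - Real.log (b s)))
            = ((∏ j, b (ω j)) * empDist ω s) *
              (Real.log (empDist ω s) - (Real.log (b s) + Real.log T))
              + ((∏ j, b (ω j)) * empDist ω s) * Real.log T := by ring
          _ ≤ ((∏ j, b (ω j)) * empDist ω s) * (empDist ω s / (b s * T) - 1)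
              + ((∏ j, b (ω j)) * empDist ω s) * Real.log T := by linarith
          _ = ((∏ j, b (ω j)) * empDist ω s) * Real.log T
              + ((∏ j, b (ω j)) * ((empDist ω s)^2 / b s)) / T
              - (∏ j, b (ω j)) * empDist ω s := by
              field_simp
              ring
  -- per-ω bound
  have homega : ∀ ω : Fin M → S,
      (∏ j, b (ω j)) * (∑ s, empDist ω s * (Real.log (empDist ω s) - Real.log (b s)))
      ≤ (∏ j, b (ω j)) * Real.log T
        + ((∏ j, b (ω j)) * (∑ s, (empDist ω s)^2 / b s)) / T - (∏ j, b (ω j)) := by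
    intro ω
    rw [Finset.mul_sum]
    calc ∑ s, (∏ j, b (ω j)) * (empDist ω s * (Real.log (empDist ω s) - Real.log (b s)))
        ≤ ∑ s, (((∏ j, b (ω j)) * empDist ω s) * Real.log T
            + ((∏ j, b (ω j)) * ((empDist ω s)^2 / b s)) / T - (∏ j, b (ω j)) * empDist ω s) :=
          Finset.sum_le_sum fun s _ => hterm ω s
      _ = (∏ j, b (ω j)) * Real.log T
            + ((∏ j, b (ω j)) * (∑ s, (empDist ω s)^2 / b s)) / T - (∏ j, b (ω j)) := by
          rw [Finset.sum_sub_distrib, Finset.sum_add_distrib, ← Finset.sum_mul, ← Finset.sum_div]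
          simp_rw [← Finset.mul_sum]
          rw [emp_sum_one hM ω]
          ring
  calc ∑ ω : Fin M → S, (∏ j, b (ω j)) *
        (∑ s, empDist ω s * (Real.log (empDist ω s) - Real.log (b s)))
      ≤ ∑ ω : Fin M → S, ((∏ j, b (ω j)) * Real.log T
          + ((∏ j, b (ω j)) * (∑ s, (empDist ω s)^2 / b s)) / T - (∏ j, b (ω j))) :=
        Finset.sum_le_sum fun ω _ => homega ω
    _ = Real.log T := by
        rw [Finset.sum_sub_distrib, Finset.sum_add_distrib, ← Finset.sum_mul, ← Finset.sum_div,
          sum_p_one b hb1, hE]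
        rw [div_self hT0.ne']
        ring
end

section
/- Robustness of greedy maximization to per-step noise: if F is non-negative, monotone, and submodular, and at each of k steps the algorithm selects an element i' with Δ_F(i'|A) ≥ max_{i ∈ X \ A} Δ_F(i|A) - ε₁, then the resulting set A' satisfies F(A') ≥ (1 - 1/e)·F(A*) - k·ε₁, where A* is optimal among sets of size at most k. -/
open Finset

lemma marginal_sum {X : Type*} [DecidableEq X]
    (F : Finset X → ℝ)
    (hmono : ∀ A B : Finset X, A ⊆ B → F A ≤ F B)
    (hsub : ∀ A B : Finset X, A ⊆ B → ∀ i ∉ B,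
      F (insert i B) - F B ≤ F (insert i A) - F A)
    (A : Finset X) (S : Finset X) :
    F (A ∪ S) - F A ≤ ∑ j ∈ S, (F (insert j A) - F A) := by
  induction S using Finset.induction_on with
  | empty => simp
  | @insert j S hj ih =>
    rw [Finset.sum_insert hj]
    have h1 : A ∪ insert j S = insert j (A ∪ S) := by
      ext x; simp [or_comm, or_left_comm, or_assoc]
    rw [h1]
    by_cases hjA : j ∈ A ∪ S
    · rw [Finset.insert_eq_self.2 hjA]
      have : (0:ℝ) ≤ F (insert j A) - F A :=
        sub_nonneg.2 (hmono _ _ (Finset.subset_insert _ _))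
      linarith
    · have := hsub A (A ∪ S) Finset.subset_union_left j hjA
      linarith

/-- robustness of greedy maximization to per-step noise: `k` successive
ε₁-approximately-greedy insertions for a non-negative monotone submodular `F` yield a set
`A'` with `F(A') ≥ (1 - 1/e) F(A*) - k ε₁`. -/
theorem pac_stmt_12 {X : Type*} [Fintype X] [DecidableEq X]
    (F : Finset X → ℝ)
    (hnonneg : ∀ A : Finset X, 0 ≤ F A)
    (hmono : ∀ A B : Finset X, A ⊆ B → F A ≤ F B)
    (hsub : ∀ A B : Finset X, A ⊆ B → ∀ i ∉ B,
      F (insert i B) - F B ≤ F (insert i A) - F A)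
    (k : ℕ) (hk : 1 ≤ k) (ε₁ : ℝ) (hε : 0 ≤ ε₁)
    (A : ℕ → Finset X) (h0 : A 0 = ∅)
    (hstep : ∀ m < k, ∃ i ∉ A m, A (m + 1) = insert i (A m) ∧
      ∀ j ∉ A m, F (insert i (A m)) - F (A m) ≥
        (F (insert j (A m)) - F (A m)) - ε₁)
    (Astar : Finset X) (hcard : Astar.card ≤ k)
    (hopt : ∀ B : Finset X, B.card ≤ k → F B ≤ F Astar) :
    F (A k) ≥ (1 - (Real.exp 1)⁻¹) * F Astar - (k : ℝ) * ε₁ := by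
  have hk0 : (0:ℝ) < (k:ℝ) := by exact_mod_cast hk
  set q : ℝ := 1 - 1/(k:ℝ) with hq
  have hinv1 : 1/(k:ℝ) ≤ 1 := by
    rw [div_le_one hk0]; exact_mod_cast hk
  have hinv0 : 0 < 1/(k:ℝ) := by positivity
  have hq0 : 0 ≤ q := by rw [hq]; linarith
  have hq1 : q ≤ 1 := by rw [hq]; linarith
  set g0 : ℝ := F Astar - F (A 0) with hg0
  -- main induction
  have main : ∀ m, m ≤ k → F Astar - F (A m) ≤ q ^ m * g0 + m * ε₁ := by
    intro m
    induction m with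
    | zero => intro _; simp [hg0]
    | succ m ih =>
      intro hm1
      have hm : m < k := hm1
      have ihm := ih (le_of_lt hm)
      obtain ⟨i, hi, hA1, hgreedy⟩ := hstep m hm
      set Δ : ℝ := F (insert i (A m)) - F (A m) with hΔ
      have hΔ0 : 0 ≤ Δ := sub_nonneg.2 (hmono _ _ (Finset.subset_insert _ _))
      -- key bound: F Astar - F (A m) ≤ k * (Δ + ε₁)
      have key : F Astar - F (A m) ≤ (k:ℝ) * (Δ + ε₁) := by
        have h1 : F Astar ≤ F (A m ∪ Astar) :=
          hmono _ _ Finset.subset_union_right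
        have h2 : F (A m ∪ Astar) - F (A m) ≤
            ∑ j ∈ Astar, (F (insert j (A m)) - F (A m)) :=
          marginal_sum F hmono hsub (A m) Astar
        have h3 : ∑ j ∈ Astar, (F (insert j (A m)) - F (A m)) ≤
            ∑ _j ∈ Astar, (Δ + ε₁) := by
          apply Finset.sum_le_sum
          intro j hjs
          by_cases hjA : j ∈ A m
          · rw [Finset.insert_eq_self.2 hjA]; linarith
          · have := hgreedy j hjA; linarith
        have h4 : ∑ _j ∈ Astar, (Δ + ε₁) = (Astar.card : ℝ) * (Δ + ε₁) := by
          rw [Finset.sum_const, nsmul_eq_mul]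
        have h5 : (Astar.card : ℝ) * (Δ + ε₁) ≤ (k:ℝ) * (Δ + ε₁) := by
          apply mul_le_mul_of_nonneg_right _ (by linarith)
          exact_mod_cast hcard
        linarith
      have hΔge : Δ ≥ (F Astar - F (A m)) / (k:ℝ) - ε₁ := by
        rw [ge_iff_le, sub_le_iff_le_add, div_le_iff₀ hk0]
        nlinarith
      have hrec : F Astar - F (A (m+1)) ≤ q * (F Astar - F (A m)) + ε₁ := by
        rw [hA1]
        have hqe : q * (F Astar - F (A m)) = (F Astar - F (A m)) -
            (F Astar - F (A m)) / (k:ℝ) := by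
          rw [hq]; field_simp
        have hins : F (insert i (A m)) = F (A m) + Δ := by rw [hΔ]; ring
        rw [hins, hqe]
        linarith
      have step1 : q * (F Astar - F (A m)) + ε₁ ≤ q * (q ^ m * g0 + ↑m * ε₁) + ε₁ := by
        have := mul_le_mul_of_nonneg_left ihm hq0
        linarith
      have step2 : q * (q ^ m * g0 + ↑m * ε₁) + ε₁ ≤ q ^ (m+1) * g0 + (↑m + 1) * ε₁ := by
        have hme : (0:ℝ) ≤ (m:ℝ) * ε₁ := by positivity
        have h6 : q * ((m:ℝ) * ε₁) ≤ (m:ℝ) * ε₁ := by nlinarith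
        have h7 : q * (q ^ m * g0) = q ^ (m+1) * g0 := by ring
        nlinarith
      have : ((m:ℝ) + 1) = ((m+1 : ℕ) : ℝ) := by push_cast; ring
      rw [← this]
      linarith
  have hfin := main k le_rfl
  -- (1 - 1/k)^k ≤ exp(-1)
  have hpow : q ^ k ≤ (Real.exp 1)⁻¹ := by
    have h1 : q ≤ Real.exp (-(1/(k:ℝ))) := by
      have := Real.add_one_le_exp (-(1/(k:ℝ)))
      rw [hq]; linarith
    have h2 : q ^ k ≤ (Real.exp (-(1/(k:ℝ)))) ^ k :=
      pow_le_pow_left₀ hq0 h1 k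
    have h3 : (Real.exp (-(1/(k:ℝ)))) ^ k = Real.exp ((k:ℝ) * (-(1/(k:ℝ)))) :=
      (Real.exp_nat_mul _ k).symm
    have h4 : (k:ℝ) * (-(1/(k:ℝ))) = -1 := by field_simp
    rw [h3, h4, Real.exp_neg] at h2
    exact h2
  have hg0nn : 0 ≤ g0 := by
    rw [hg0, h0]
    have := hopt ∅ (by simp)
    linarith
  have hg0le : g0 ≤ F Astar := by
    rw [hg0, h0]
    have := hnonneg ∅
    linarith
  have hqk0 : 0 ≤ q ^ k := pow_nonneg hq0 k
  have hexp : (0:ℝ) < (Real.exp 1)⁻¹ := by positivity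
  have hfinal : q ^ k * g0 ≤ (Real.exp 1)⁻¹ * F Astar := by
    calc q ^ k * g0 ≤ (Real.exp 1)⁻¹ * g0 := mul_le_mul_of_nonneg_right hpow hg0nn
      _ ≤ (Real.exp 1)⁻¹ * F Astar := mul_le_mul_of_nonneg_left hg0le (le_of_lt hexp)
  nlinarith [hfin]
end

section
/- If the observations Z_1, ..., Z_n are conditionally independent given the hidden state S, then the set function F(A) = H(S) - H(S | Z_A) (information gain) is submodular in A. -/
open Finset

/-- Distribution (pmf) of a random variable `X` on a finite probability space with mass
function `p`. -/
noncomputable def rvDist {Ω α : Type*} [Fintype Ω] [DecidableEq α]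
    (p : Ω → ℝ) (X : Ω → α) (x : α) : ℝ :=
  ∑ ω, if X ω = x then p ω else 0

/-- Shannon entropy (natural log) of a random variable on a finite probability space. -/
noncomputable def rvEntropy {Ω α : Type*} [Fintype Ω] [Fintype α] [DecidableEq α]
    (p : Ω → ℝ) (X : Ω → α) : ℝ :=
  - ∑ x, rvDist p X x * Real.log (rvDist p X x)

/-- Conditional Shannon entropy `H(X|Y) = Σ_y Pr(Y = y) H(X | Y = y)
= -Σ_{x,y} Pr(x,y) log (Pr(x,y) / Pr(y))` on a finite probability space. -/
noncomputable def rvCondEntropy {Ω α β : Type*} [Fintype Ω]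
    [Fintype α] [DecidableEq α] [Fintype β] [DecidableEq β]
    (p : Ω → ℝ) (X : Ω → α) (Y : Ω → β) : ℝ :=
  - ∑ x, ∑ y,
      rvDist p (fun ω => (X ω, Y ω)) (x, y) *
        Real.log (rvDist p (fun ω => (X ω, Y ω)) (x, y) / rvDist p Y y)


set_option linter.unusedSectionVars false

open Finset

namespace PacAux

variable {ι σ V : Type*} [Fintype ι] [DecidableEq ι] [Fintype σ] [DecidableEq σ]
  [Fintype V] [DecidableEq V]

noncomputable def mu (q : σ × (ι → V) → ℝ) (C : Finset ι) (s : σ) (v : ι → V) : ℝ :=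
  ∑ w, if w.1 = s ∧ ∀ j ∈ C, w.2 j = v j then q w else 0

noncomputable def nu (q : σ × (ι → V) → ℝ) (C : Finset ι) (v : ι → V) : ℝ :=
  ∑ w, if ∀ j ∈ C, w.2 j = v j then q w else 0

noncomputable def piq (q : σ × (ι → V) → ℝ) (s : σ) : ℝ :=
  ∑ w, if w.1 = s then q w else 0

variable (q : σ × (ι → V) → ℝ)

lemma mu_nonneg (hq : ∀ w, 0 ≤ q w) (C : Finset ι) (s : σ) (v : ι → V) :
    0 ≤ mu q C s v :=
  Finset.sum_nonneg fun w _ => by split_ifs; exacts [hq w, le_rfl]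

lemma nu_nonneg (hq : ∀ w, 0 ≤ q w) (C : Finset ι) (v : ι → V) :
    0 ≤ nu q C v :=
  Finset.sum_nonneg fun w _ => by split_ifs; exacts [hq w, le_rfl]

lemma piq_nonneg (hq : ∀ w, 0 ≤ q w) (s : σ) : 0 ≤ piq q s :=
  Finset.sum_nonneg fun w _ => by split_ifs; exacts [hq w, le_rfl]

lemma le_mu (hq : ∀ w, 0 ≤ q w) (C : Finset ι) (w : σ × (ι → V)) :
    q w ≤ mu q C w.1 w.2 := by
  have h := Finset.single_le_sum
    (f := fun w' => if w'.1 = w.1 ∧ ∀ j ∈ C, w'.2 j = w.2 j then q w' else 0)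
    (fun w' _ => by beta_reduce; split_ifs; exacts [hq w', le_rfl]) (Finset.mem_univ w)
  simpa [mu] using h

lemma le_nu (hq : ∀ w, 0 ≤ q w) (C : Finset ι) (w : σ × (ι → V)) :
    q w ≤ nu q C w.2 := by
  have h := Finset.single_le_sum
    (f := fun w' => if ∀ j ∈ C, w'.2 j = w.2 j then q w' else 0)
    (fun w' _ => by beta_reduce; split_ifs; exacts [hq w', le_rfl]) (Finset.mem_univ w)
  simpa [nu] using h

lemma le_piq (hq : ∀ w, 0 ≤ q w) (w : σ × (ι → V)) :
    q w ≤ piq q w.1 := by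
  have h := Finset.single_le_sum
    (f := fun w' => if w'.1 = w.1 then q w' else 0)
    (fun w' _ => by beta_reduce; split_ifs; exacts [hq w', le_rfl]) (Finset.mem_univ w)
  simpa [piq] using h

lemma nu_anti (hq : ∀ w, 0 ≤ q w) {C D : Finset ι} (hCD : C ⊆ D) (v : ι → V) :
    nu q D v ≤ nu q C v := by
  refine Finset.sum_le_sum fun w _ => ?_
  split_ifs with h1 h2
  · exact le_rfl
  · exact absurd (fun j hj => h1 j (hCD hj)) h2
  · exact hq w
  · exact le_rfl

lemma nu_congr {C : Finset ι} {v v' : ι → V} (h : ∀ j ∈ C, v j = v' j) :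
    nu q C v = nu q C v' := by
  refine Finset.sum_congr rfl fun w _ => ?_
  refine if_congr ⟨fun hh j hj => (hh j hj).trans (h j hj),
    fun hh j hj => (hh j hj).trans (h j hj).symm⟩ rfl rfl

lemma mu_congr {C : Finset ι} (s : σ) {v v' : ι → V} (h : ∀ j ∈ C, v j = v' j) :
    mu q C s v = mu q C s v' := by
  refine Finset.sum_congr rfl fun w _ => ?_
  refine if_congr (and_congr_right fun _ => ⟨fun hh j hj => (hh j hj).trans (h j hj),
    fun hh j hj => (hh j hj).trans (h j hj).symm⟩) rfl rfl

lemma mu_singleton (j : ι) (s : σ) (v : ι → V) :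
    mu q {j} s v = ∑ w, if w.1 = s ∧ w.2 j = v j then q w else 0 := by
  unfold mu
  refine Finset.sum_congr rfl fun w _ => ?_
  simp

section lift

variable {Ω γ α : Type*} [Fintype Ω] [Fintype γ] [DecidableEq γ] [DecidableEq α]

lemma rvDist_comp (p : Ω → ℝ) (X : Ω → γ) (g : γ → α) (y : α) :
    rvDist p (fun ω => g (X ω)) y = ∑ w, if g w = y then rvDist p X w else 0 := by
  unfold rvDist
  have h1 : ∀ w : γ, (if g w = y then (∑ ω, if X ω = w then p ω else 0) else 0)
      = ∑ ω, if X ω = w ∧ g w = y then p ω else 0 := by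
    intro w
    split_ifs with h
    · exact Finset.sum_congr rfl fun ω _ => by simp [h]
    · exact (Finset.sum_eq_zero fun ω _ => by simp [h]).symm
  simp only [h1]
  rw [Finset.sum_comm]
  refine Finset.sum_congr rfl fun ω _ => ?_
  simp [ite_and, Finset.sum_ite_eq]

lemma sum_rvDist (p : Ω → ℝ) (X : Ω → γ) : ∑ w, rvDist p X w = ∑ ω, p ω := by
  unfold rvDist
  rw [Finset.sum_comm]
  refine Finset.sum_congr rfl fun ω _ => ?_
  simp [Finset.sum_ite_eq]

lemma sum_marg_mul (q : γ → ℝ) (g : γ → α) [Fintype α] (F : α → ℝ) :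
    ∑ a, (∑ w, if g w = a then q w else 0) * F a = ∑ w, q w * F (g w) := by
  have h1 : ∀ a, (∑ w, if g w = a then q w else 0) * F a
      = ∑ w, if g w = a then q w * F (g w) else 0 := by
    intro a
    rw [Finset.sum_mul]
    refine Finset.sum_congr rfl fun w _ => ?_
    split_ifs with h
    · rw [h]
    · exact zero_mul _
  simp only [h1]
  rw [Finset.sum_comm]
  refine Finset.sum_congr rfl fun w _ => ?_
  simp [Finset.sum_ite_eq]

end lift

section condent

variable {Ω : Type*} [Fintype Ω]

set_option maxHeartbeats 2000000 in
lemma condEnt_eq (p : Ω → ℝ) (S : Ω → σ) (Z : ι → Ω → V) (C : Finset ι) :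
    rvCondEntropy p S (fun ω (j : C) => Z j ω) =
      -∑ w : σ × (ι → V), rvDist p (fun ω => (S ω, fun i => Z i ω)) w *
        Real.log (mu (rvDist p (fun ω => (S ω, fun i => Z i ω))) C w.1 w.2 /
          nu (rvDist p (fun ω => (S ω, fun i => Z i ω))) C w.2) := by
  classical
  set q : σ × (ι → V) → ℝ := rvDist p (fun ω => (S ω, fun i => Z i ω)) with hqdef
  have hJ : ∀ a : σ × (↥C → V),
      rvDist p (fun ω => (S ω, fun j : C => Z j ω)) a
        = ∑ w : σ × (ι → V), if (w.1, fun j : C => w.2 j) = a then q w else 0 :=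
    fun a => rvDist_comp p (fun ω => (S ω, fun i => Z i ω))
      (fun w => (w.1, fun j : C => w.2 j)) a
  have hK : ∀ y : (↥C → V),
      rvDist p (fun ω (j : C) => Z j ω) y
        = ∑ w : σ × (ι → V), if (fun j : C => w.2 j) = y then q w else 0 :=
    fun y => rvDist_comp p (fun ω => (S ω, fun i => Z i ω))
      (fun w => (fun j : C => w.2 j)) y
  have hmu : ∀ w : σ × (ι → V),
      (∑ w' : σ × (ι → V), if (w'.1, fun j : C => w'.2 j) = (w.1, fun j : C => w.2 j)
          then q w' else 0) = mu q C w.1 w.2 := by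
    intro w
    refine Finset.sum_congr rfl fun w' _ => if_congr ?_ rfl rfl
    simp [Prod.ext_iff, funext_iff, Subtype.forall]
  have hnu : ∀ w : σ × (ι → V),
      (∑ w' : σ × (ι → V), if (fun j : C => w'.2 j) = (fun j : C => w.2 j)
          then q w' else 0) = nu q C w.2 := by
    intro w
    refine Finset.sum_congr rfl fun w' _ => if_congr ?_ rfl rfl
    simp [funext_iff, Subtype.forall]
  rw [rvCondEntropy]
  refine congrArg Neg.neg ?_
  rw [show (∑ x : σ, ∑ y : ↥C → V,
      rvDist p (fun ω => (S ω, fun j : C => Z j ω)) (x, y) *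
        Real.log (rvDist p (fun ω => (S ω, fun j : C => Z j ω)) (x, y) /
          rvDist p (fun ω (j : C) => Z j ω) y))
      = ∑ a : σ × (↥C → V),
          rvDist p (fun ω => (S ω, fun j : C => Z j ω)) a *
            Real.log (rvDist p (fun ω => (S ω, fun j : C => Z j ω)) a /
              rvDist p (fun ω (j : C) => Z j ω) a.2)
    from (Fintype.sum_prod_type (f := fun a : σ × (↥C → V) =>
      rvDist p (fun ω => (S ω, fun j : C => Z j ω)) a *
        Real.log (rvDist p (fun ω => (S ω, fun j : C => Z j ω)) a /
          rvDist p (fun ω (j : C) => Z j ω) a.2))).symm]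
  have hbody : ∀ a : σ × (↥C → V),
      rvDist p (fun ω => (S ω, fun j : C => Z j ω)) a *
          Real.log (rvDist p (fun ω => (S ω, fun j : C => Z j ω)) a /
            rvDist p (fun ω (j : C) => Z j ω) a.2)
        = (∑ w : σ × (ι → V), if (w.1, fun j : C => w.2 j) = a then q w else 0) *
            (fun a : σ × (↥C → V) =>
              Real.log ((∑ w : σ × (ι → V), if (w.1, fun j : C => w.2 j) = a then q w else 0) /
                (∑ w : σ × (ι → V), if (fun j : C => w.2 j) = a.2 then q w else 0))) a := by
    intro a
    rw [hJ, hK]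
  rw [Finset.sum_congr rfl fun a _ => hbody a]
  rw [sum_marg_mul q (fun w : σ × (ι → V) => (w.1, fun j : C => w.2 j))]
  refine Finset.sum_congr rfl fun w _ => ?_
  dsimp only
  rw [hmu, hnu]

end condent

section ci

lemma mu_eq_sum_fiber (s : σ) (C : Finset ι) (v : ι → V) :
    mu q C s v = ∑ v' : ι → V, if (∀ j ∈ C, v' j = v j) then q (s, v') else 0 := by
  unfold mu
  rw [Fintype.sum_prod_type, Finset.sum_comm]
  refine Finset.sum_congr rfl fun v' _ => ?_
  by_cases h : ∀ j ∈ C, v' j = v j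
  · rw [if_pos h, Finset.sum_congr rfl fun x _ => if_congr (and_iff_left h) rfl rfl,
      Finset.sum_ite_eq' Finset.univ s fun x => q (x, v')]
    simp
  · rw [if_neg h]
    refine Finset.sum_eq_zero fun x _ => ?_
    rw [if_neg (fun hc => h hc.2)]

lemma sum_mu_single (s : σ) (j : ι) :
    ∑ x : V, (∑ w : σ × (ι → V), if w.1 = s ∧ w.2 j = x then q w else 0) = piq q s := by
  rw [Finset.sum_comm]
  refine Finset.sum_congr rfl fun w _ => ?_
  by_cases h : w.1 = s
  · simp [h, Finset.sum_ite_eq]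
  · simp [h]

lemma ci_subset
    (hCI : ∀ s v, q (s, v) * piq q s ^ (Fintype.card ι - 1) = ∏ j, mu q {j} s v)
    (C : Finset ι) (s : σ) (v : ι → V) :
    mu q C s v * piq q s ^ (Fintype.card ι - 1)
      = (∏ j ∈ C, mu q {j} s v) * piq q s ^ (Fintype.card ι - C.card) := by
  classical
  rw [mu_eq_sum_fiber, Finset.sum_mul]
  have h1 : ∀ v' : ι → V,
      (if (∀ j ∈ C, v' j = v j) then q (s, v') else 0) * piq q s ^ (Fintype.card ι - 1)
        = if (∀ j ∈ C, v' j = v j) then ∏ j, mu q {j} s v' else 0 := by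
    intro v'; split_ifs with h
    · exact hCI s v'
    · exact zero_mul _
  simp only [h1]
  have h2 : ∀ v' : ι → V, (∀ j ∈ C, v' j = v j) →
      (∏ j, mu q {j} s v')
        = (∏ j ∈ C, mu q {j} s v) * ∏ j : {x // ¬ x ∈ C}, mu q {(j : ι)} s v' := by
    intro v' h
    rw [← Fintype.prod_subtype_mul_prod_subtype (fun x => x ∈ C) (fun j => mu q {j} s v')]
    congr 1
    rw [← Finset.prod_subtype C (fun x => Iff.rfl) (fun j => mu q {j} s v')]
    refine Finset.prod_congr rfl ?_
    intro j hj
    refine mu_congr q s ?_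
    intro k hk
    rw [Finset.mem_singleton] at hk
    rw [hk]
    exact h j hj
  have h3 : ∀ v' : ι → V,
      (if (∀ j ∈ C, v' j = v j) then ∏ j, mu q {j} s v' else 0)
        = (∏ j ∈ C, mu q {j} s v) *
            (if (∀ j ∈ C, v' j = v j) then ∏ j : {x // ¬ x ∈ C}, mu q {(j : ι)} s v' else 0) := by
    intro v'; split_ifs with h
    · exact h2 v' h
    · exact (mul_zero _).symm
  simp only [h3]
  rw [← Finset.mul_sum]
  congr 1
  -- remains: ∑ v', if cond then ∏ compl else 0 = piq ^ (n - |C|)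
  rw [← Equiv.sum_comp ((Equiv.piEquivPiSubtypeProd (fun x => x ∈ C) (fun _ => V)).symm)
    (fun v' : ι → V =>
    if (∀ j ∈ C, v' j = v j) then ∏ j : {x // ¬ x ∈ C}, mu q {(j : ι)} s v' else 0)]
  rw [Fintype.sum_prod_type]
  have hcond : ∀ (a : {x // x ∈ C} → V) (c : {x // ¬ x ∈ C} → V),
      (∀ j ∈ C, (Equiv.piEquivPiSubtypeProd (fun x => x ∈ C) (fun _ => V)).symm (a, c) j = v j) ↔ a = fun j : {x // x ∈ C} => v j := by
    intro a c
    simp only [Equiv.piEquivPiSubtypeProd_symm_apply, funext_iff, Subtype.forall]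
    constructor
    · intro h j hj; rw [← h j hj]; simp [hj]
    · intro h j hj; rw [← h j hj]; simp [hj]
  have hprod : ∀ (a : {x // x ∈ C} → V) (c : {x // ¬ x ∈ C} → V),
      (∏ j : {x // ¬ x ∈ C}, mu q {(j : ι)} s ((Equiv.piEquivPiSubtypeProd (fun x => x ∈ C) (fun _ => V)).symm (a, c)))
        = ∏ j : {x // ¬ x ∈ C},
            (∑ w : σ × (ι → V), if w.1 = s ∧ w.2 (j : ι) = c j then q w else 0) := by
    intro a c
    refine Finset.prod_congr rfl fun j _ => ?_
    rw [mu_singleton]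
    refine Finset.sum_congr rfl fun w _ => if_congr (and_congr_right fun _ => ?_) rfl rfl
    have : (Equiv.piEquivPiSubtypeProd (fun x => x ∈ C) (fun _ => V)).symm (a, c) (j : ι) = c j := by
      simp only [Equiv.piEquivPiSubtypeProd_symm_apply, dif_neg j.2]
    rw [this]
  have hmain : ∀ (a : {x // x ∈ C} → V),
      (∑ c : {x // ¬ x ∈ C} → V,
        if (∀ j ∈ C, (Equiv.piEquivPiSubtypeProd (fun x => x ∈ C) (fun _ => V)).symm (a, c) j = v j) then ∏ j : {x // ¬ x ∈ C}, mu q {(j : ι)} s ((Equiv.piEquivPiSubtypeProd (fun x => x ∈ C) (fun _ => V)).symm (a, c)) else 0)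
      = if a = (fun j : {x // x ∈ C} => v j) then
          ∑ c : {x // ¬ x ∈ C} → V, ∏ j : {x // ¬ x ∈ C},
            (∑ w : σ × (ι → V), if w.1 = s ∧ w.2 (j : ι) = c j then q w else 0)
        else 0 := by
    intro a
    by_cases ha : a = (fun j : {x // x ∈ C} => v j)
    · rw [if_pos ha]
      refine Finset.sum_congr rfl fun c _ => ?_
      rw [if_pos ((hcond a c).mpr ha)]
      exact hprod a c
    · rw [if_neg ha]
      refine Finset.sum_eq_zero fun c _ => ?_
      rw [if_neg (fun h => ha ((hcond a c).mp h))]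
  simp only [hmain]
  rw [Finset.sum_ite_eq' Finset.univ (fun j : {x // x ∈ C} => v j)]
  simp only [Finset.mem_univ, if_true]
  rw [← Fintype.prod_sum (fun (j : {x // ¬ x ∈ C}) (x : V) =>
    ∑ w : σ × (ι → V), if w.1 = s ∧ w.2 (j : ι) = x then q w else 0)]
  have : ∀ j : {x // ¬ x ∈ C},
      (∑ x : V, ∑ w : σ × (ι → V), if w.1 = s ∧ w.2 (j : ι) = x then q w else 0) = piq q s :=
    fun j => sum_mu_single q s j
  rw [Finset.prod_congr rfl fun j _ => this j, Finset.prod_const]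
  congr 1
  simp [Finset.card_univ, Fintype.card_subtype_compl, Fintype.card_coe]

end ci

section pair

lemma ci_pair
    (hCI : ∀ s v, q (s, v) * piq q s ^ (Fintype.card ι - 1) = ∏ j, mu q {j} s v)
    {C : Finset ι} {i : ι} (hiC : i ∉ C) {s : σ} (hs : piq q s ≠ 0) (v : ι → V) :
    mu q (insert i C) s v * piq q s = mu q C s v * mu q {i} s v := by
  have h1 := ci_subset q hCI (insert i C) s v
  have h2 := ci_subset q hCI C s v
  rw [Finset.prod_insert hiC, Finset.card_insert_of_notMem hiC] at h1
  have hcard : (C.card + 1) ≤ Fintype.card ι := by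
    simpa [Finset.card_insert_of_notMem hiC] using Finset.card_le_univ (insert i C)
  have hexp : Fintype.card ι - C.card = (Fintype.card ι - (C.card + 1)) + 1 := by omega
  rw [hexp, pow_succ] at h2
  have hne : (piq q s ^ (Fintype.card ι - 1))
      * (piq q s ^ (Fintype.card ι - (C.card + 1))) ≠ 0 :=
    mul_ne_zero (pow_ne_zero _ hs) (pow_ne_zero _ hs)
  apply mul_left_cancel₀ hne
  set P1 := piq q s ^ (Fintype.card ι - 1) with hP1
  set Pm := piq q s ^ (Fintype.card ι - (C.card + 1)) with hPm
  set Pc := ∏ j ∈ C, mu q {j} s v with hPc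
  linear_combination (Pm * piq q s) * h1 - (mu q {i} s v * Pm) * h2

end pair

section collapse

noncomputable def ext (B : Finset ι) (b : ↥B → V) (u : V) : ι → V :=
  fun j => if h : j ∈ B then b ⟨j, h⟩ else u

lemma ext_mem (B : Finset ι) (b : ↥B → V) (u : V) {j : ι} (hj : j ∈ B) :
    ext B b u j = b ⟨j, hj⟩ := dif_pos hj

lemma ext_not_mem (B : Finset ι) (b : ↥B → V) (u : V) {j : ι} (hj : j ∉ B) :
    ext B b u j = u := dif_neg hj

lemma collapse_sum (B : Finset ι) (i : ι) (hi : i ∉ B) (f : (ι → V) → ℝ)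
    (hf : ∀ v v' : ι → V, (∀ j ∈ B, v j = v' j) → v i = v' i → f v = f v') :
    ∑ w : σ × (ι → V), q w * f w.2
      = ∑ b : (↥B → V), ∑ u : V, nu q (insert i B) (ext B b u) * f (ext B b u) := by
  have hcond : ∀ (w : σ × (ι → V)) (b : ↥B → V) (u : V),
      (∀ j ∈ insert i B, w.2 j = ext B b u j)
        ↔ ((fun j : ↥B => w.2 j) = b ∧ w.2 i = u) := by
    intro w b u
    rw [Finset.forall_mem_insert, funext_iff]
    constructor
    · rintro ⟨h1, h2⟩
      refine ⟨fun j => ?_, by rw [h1, ext_not_mem B b u hi]⟩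
      rw [h2 j j.2, ext_mem B b u j.2]
    · rintro ⟨h1, h2⟩
      refine ⟨by rw [h2, ext_not_mem B b u hi], fun j hj => ?_⟩
      rw [ext_mem B b u hj, ← h1 ⟨j, hj⟩]
  have hterm : ∀ (b : ↥B → V) (u : V),
      nu q (insert i B) (ext B b u) * f (ext B b u)
        = ∑ w : σ × (ι → V),
            if ((fun j : ↥B => w.2 j) = b ∧ w.2 i = u) then q w * f w.2 else 0 := by
    intro b u
    unfold nu
    rw [Finset.sum_mul]
    refine Finset.sum_congr rfl fun w _ => ?_
    by_cases h : ∀ j ∈ insert i B, w.2 j = ext B b u j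
    · rw [if_pos h, if_pos ((hcond w b u).mp h)]
      have hfeq : f (ext B b u) = f w.2 := by
        refine hf _ _ (fun j hj => ?_) ?_
        · rw [(h j (Finset.mem_insert_of_mem hj)).symm]
        · rw [(h i (Finset.mem_insert_self i B)).symm]
      rw [hfeq]
    · rw [if_neg h, if_neg (fun hc => h ((hcond w b u).mpr hc)), zero_mul]
  have hinner : ∀ w : σ × (ι → V),
      (∑ b : ↥B → V, ∑ u : V,
        if ((fun j : ↥B => w.2 j) = b ∧ w.2 i = u) then q w * f w.2 else 0)
      = q w * f w.2 := by
    intro w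
    simp [ite_and, Finset.sum_ite_eq]
  calc ∑ w : σ × (ι → V), q w * f w.2
      = ∑ w : σ × (ι → V), ∑ b : ↥B → V, ∑ u : V,
          (if ((fun j : ↥B => w.2 j) = b ∧ w.2 i = u) then q w * f w.2 else 0) :=
        Finset.sum_congr rfl fun w _ => (hinner w).symm
    _ = ∑ b : ↥B → V, ∑ w : σ × (ι → V), ∑ u : V,
          (if ((fun j : ↥B => w.2 j) = b ∧ w.2 i = u) then q w * f w.2 else 0) :=
        Finset.sum_comm
    _ = ∑ b : ↥B → V, ∑ u : V, ∑ w : σ × (ι → V),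
          (if ((fun j : ↥B => w.2 j) = b ∧ w.2 i = u) then q w * f w.2 else 0) :=
        Finset.sum_congr rfl fun b _ => Finset.sum_comm
    _ = ∑ b : (↥B → V), ∑ u : V, nu q (insert i B) (ext B b u) * f (ext B b u) :=
        Finset.sum_congr rfl fun b _ => Finset.sum_congr rfl fun u _ => (hterm b u).symm

end collapse

section Tbound

lemma sum_nu_ext (B : Finset ι) (u₀ : V) :
    ∑ b : ↥B → V, nu q B (ext B b u₀) = ∑ w : σ × (ι → V), q w := by
  calc ∑ b : ↥B → V, nu q B (ext B b u₀)
      = ∑ b : ↥B → V, ∑ w : σ × (ι → V),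
          (if (fun j : ↥B => w.2 j) = b then q w else 0) := by
        refine Finset.sum_congr rfl fun b _ => Finset.sum_congr rfl fun w _ =>
          if_congr ?_ rfl rfl
        exact ⟨fun h => funext fun j => by rw [h j j.2, ext_mem B b u₀ j.2],
          fun h j hj => by rw [ext_mem B b u₀ hj, ← congrFun h ⟨j, hj⟩]⟩
    _ = ∑ w : σ × (ι → V), ∑ b : ↥B → V,
          (if (fun j : ↥B => w.2 j) = b then q w else 0) := Finset.sum_comm
    _ = ∑ w : σ × (ι → V), q w :=
        Finset.sum_congr rfl fun w _ => by simp [Finset.sum_ite_eq]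

lemma sum_nu_insert_ext {A B : Finset ι} (hAB : A ⊆ B) {i : ι} (hi : i ∉ B)
    (b : ↥B → V) (u₀ : V) :
    ∑ u : V, nu q (insert i A) (ext B b u) = nu q A (ext B b u₀) := by
  have h1 : ∀ u : V, nu q (insert i A) (ext B b u)
      = ∑ w : σ × (ι → V),
          if (w.2 i = u ∧ ∀ j ∈ A, w.2 j = ext B b u₀ j) then q w else 0 := by
    intro u
    unfold nu
    refine Finset.sum_congr rfl fun w _ => if_congr ?_ rfl rfl
    rw [Finset.forall_mem_insert]
    apply and_congr
    · rw [ext_not_mem B b u hi]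
    · refine forall₂_congr fun j hj => ?_
      rw [ext_mem B b u (hAB hj), ext_mem B b u₀ (hAB hj)]
  simp only [h1]
  rw [Finset.sum_comm]
  unfold nu
  refine Finset.sum_congr rfl fun w _ => ?_
  simp [ite_and, Finset.sum_ite_eq]

lemma T_le_one (hq0 : ∀ w, 0 ≤ q w) (hq1 : ∑ w, q w = 1)
    {A B : Finset ι} (hAB : A ⊆ B) {i : ι} (hi : i ∉ B) (v₀ : V) :
    ∑ w : σ × (ι → V), q w *
      (nu q (insert i A) w.2 * nu q B w.2 / (nu q A w.2 * nu q (insert i B) w.2)) ≤ 1 := by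
  have hf : ∀ v v' : ι → V, (∀ j ∈ B, v j = v' j) → v i = v' i →
      (fun v : ι → V => nu q (insert i A) v * nu q B v /
        (nu q A v * nu q (insert i B) v)) v
      = (fun v : ι → V => nu q (insert i A) v * nu q B v /
        (nu q A v * nu q (insert i B) v)) v' := by
    intro v v' h1 h2
    have e1 : nu q (insert i A) v = nu q (insert i A) v' := nu_congr q fun j hj => by
      rcases Finset.mem_insert.mp hj with h | h
      · rw [h]; exact h2
      · exact h1 j (hAB h)
    have e2 : nu q B v = nu q B v' := nu_congr q h1
    have e3 : nu q A v = nu q A v' := nu_congr q fun j hj => h1 j (hAB hj)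
    have e4 : nu q (insert i B) v = nu q (insert i B) v' := nu_congr q fun j hj => by
      rcases Finset.mem_insert.mp hj with h | h
      · rw [h]; exact h2
      · exact h1 j h
    dsimp only
    rw [e1, e2, e3, e4]
  calc (∑ w : σ × (ι → V), q w *
        (nu q (insert i A) w.2 * nu q B w.2 / (nu q A w.2 * nu q (insert i B) w.2)))
      = ∑ b : ↥B → V, ∑ u : V, nu q (insert i B) (ext B b u) *
          (nu q (insert i A) (ext B b u) * nu q B (ext B b u) /
            (nu q A (ext B b u) * nu q (insert i B) (ext B b u))) :=
        collapse_sum q B i hi _ hf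
    _ ≤ ∑ b : ↥B → V, nu q B (ext B b v₀) := by
        refine Finset.sum_le_sum fun b _ => ?_
        have hagree : ∀ u : V, ∀ j ∈ B, ext B b u j = ext B b v₀ j := fun u j hj => by
          rw [ext_mem B b u hj, ext_mem B b v₀ hj]
        have eB : ∀ u, nu q B (ext B b u) = nu q B (ext B b v₀) :=
          fun u => nu_congr q (hagree u)
        have eA : ∀ u, nu q A (ext B b u) = nu q A (ext B b v₀) :=
          fun u => nu_congr q fun j hj => hagree u j (hAB hj)
        have step1 : ∀ u : V, nu q (insert i B) (ext B b u) *
            (nu q (insert i A) (ext B b u) * nu q B (ext B b u) /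
              (nu q A (ext B b u) * nu q (insert i B) (ext B b u)))
            ≤ nu q (insert i A) (ext B b u) *
                (nu q B (ext B b v₀) / nu q A (ext B b v₀)) := by
          intro u
          rw [eB u, eA u]
          rcases eq_or_lt_of_le (nu_nonneg q hq0 (insert i B) (ext B b u)) with hz | hz
          · rw [← hz, zero_mul]
            have h0 : (0:ℝ) ≤ nu q (insert i A) (ext B b u) :=
              nu_nonneg q hq0 _ _
            have h0' : (0:ℝ) ≤ nu q B (ext B b v₀) / nu q A (ext B b v₀) :=
              div_nonneg (nu_nonneg q hq0 _ _) (nu_nonneg q hq0 _ _)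
            exact mul_nonneg h0 h0'
          · have hzt : nu q (insert i B) (ext B b u) ≤ nu q (insert i A) (ext B b u) :=
              nu_anti q hq0 (Finset.insert_subset_insert i hAB) _
            have htx : nu q (insert i A) (ext B b u) ≤ nu q A (ext B b v₀) := by
              rw [← eA u]
              exact nu_anti q hq0 (Finset.subset_insert i A) _
            have hx : (0:ℝ) < nu q A (ext B b v₀) := lt_of_lt_of_le hz (le_trans hzt htx)
            have heq : nu q (insert i B) (ext B b u) *
                (nu q (insert i A) (ext B b u) * nu q B (ext B b v₀) /
                  (nu q A (ext B b v₀) * nu q (insert i B) (ext B b u)))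
                = nu q (insert i A) (ext B b u) *
                    (nu q B (ext B b v₀) / nu q A (ext B b v₀)) := by
              field_simp
            rw [heq]
        calc ∑ u : V, nu q (insert i B) (ext B b u) *
              (nu q (insert i A) (ext B b u) * nu q B (ext B b u) /
                (nu q A (ext B b u) * nu q (insert i B) (ext B b u)))
            ≤ ∑ u : V, nu q (insert i A) (ext B b u) *
                (nu q B (ext B b v₀) / nu q A (ext B b v₀)) :=
              Finset.sum_le_sum fun u _ => step1 u
          _ = nu q A (ext B b v₀) * (nu q B (ext B b v₀) / nu q A (ext B b v₀)) := by
              rw [← Finset.sum_mul, sum_nu_insert_ext q hAB hi b v₀]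
          _ ≤ nu q B (ext B b v₀) := by
              rcases eq_or_lt_of_le (nu_nonneg q hq0 A (ext B b v₀)) with hx | hx
              · rw [← hx, zero_mul]
                exact nu_nonneg q hq0 _ _
              · rw [mul_div_cancel₀ _ (ne_of_gt hx)]
    _ = 1 := by rw [sum_nu_ext q B v₀, hq1]

end Tbound

section mainineq

lemma main_ineq (hq0 : ∀ w, 0 ≤ q w) (hq1 : ∑ w, q w = 1)
    (hCI : ∀ s v, q (s, v) * piq q s ^ (Fintype.card ι - 1) = ∏ j, mu q {j} s v)
    (A B : Finset ι) (hAB : A ⊆ B) (i : ι) (hi : i ∉ B) :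
    (∑ w : σ × (ι → V), q w * Real.log (mu q (insert i B) w.1 w.2 / nu q (insert i B) w.2))
      - (∑ w : σ × (ι → V), q w * Real.log (mu q B w.1 w.2 / nu q B w.2))
    ≤ (∑ w : σ × (ι → V), q w * Real.log (mu q (insert i A) w.1 w.2 / nu q (insert i A) w.2))
      - (∑ w : σ × (ι → V), q w * Real.log (mu q A w.1 w.2 / nu q A w.2)) := by
  have hiA : i ∉ A := fun h => hi (hAB h)
  have hV : Nonempty V := by
    by_contra hV
    rw [not_nonempty_iff] at hV
    haveI := hV
    haveI : IsEmpty (ι → V) := ⟨fun f => IsEmpty.false (f i)⟩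
    haveI : IsEmpty (σ × (ι → V)) := ⟨fun w => IsEmpty.false w.2⟩
    rw [Finset.univ_eq_empty, Finset.sum_empty] at hq1
    exact one_ne_zero hq1.symm
  obtain ⟨v₀⟩ := hV
  have hT := T_le_one q hq0 hq1 hAB hi v₀
  have hpt : ∀ w : σ × (ι → V),
      q w * (1 - nu q (insert i A) w.2 * nu q B w.2 / (nu q A w.2 * nu q (insert i B) w.2))
        ≤ q w * (Real.log (mu q (insert i A) w.1 w.2 / nu q (insert i A) w.2)
            - Real.log (mu q A w.1 w.2 / nu q A w.2)
            - Real.log (mu q (insert i B) w.1 w.2 / nu q (insert i B) w.2)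
            + Real.log (mu q B w.1 w.2 / nu q B w.2)) := by
    intro w
    rcases eq_or_lt_of_le (hq0 w) with hw | hw
    · rw [← hw, zero_mul, zero_mul]
    · refine mul_le_mul_of_nonneg_left ?_ (le_of_lt hw)
      have hmuAi : 0 < mu q (insert i A) w.1 w.2 := lt_of_lt_of_le hw (le_mu q hq0 _ w)
      have hmuA : 0 < mu q A w.1 w.2 := lt_of_lt_of_le hw (le_mu q hq0 _ w)
      have hmuBi : 0 < mu q (insert i B) w.1 w.2 := lt_of_lt_of_le hw (le_mu q hq0 _ w)
      have hmuB : 0 < mu q B w.1 w.2 := lt_of_lt_of_le hw (le_mu q hq0 _ w)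
      have hmui : 0 < mu q {i} w.1 w.2 := lt_of_lt_of_le hw (le_mu q hq0 _ w)
      have hnuAi : 0 < nu q (insert i A) w.2 := lt_of_lt_of_le hw (le_nu q hq0 _ w)
      have hnuA : 0 < nu q A w.2 := lt_of_lt_of_le hw (le_nu q hq0 _ w)
      have hnuBi : 0 < nu q (insert i B) w.2 := lt_of_lt_of_le hw (le_nu q hq0 _ w)
      have hnuB : 0 < nu q B w.2 := lt_of_lt_of_le hw (le_nu q hq0 _ w)
      have hpi : 0 < piq q w.1 := lt_of_lt_of_le hw (le_piq q hq0 w)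
      have hci1 := ci_pair q hCI hiA (ne_of_gt hpi) w.2 (s := w.1)
      have hci2 := ci_pair q hCI hi (ne_of_gt hpi) w.2 (s := w.1)
      have l1 : Real.log (mu q (insert i A) w.1 w.2) + Real.log (piq q w.1)
          = Real.log (mu q A w.1 w.2) + Real.log (mu q {i} w.1 w.2) := by
        rw [← Real.log_mul (ne_of_gt hmuAi) (ne_of_gt hpi),
          ← Real.log_mul (ne_of_gt hmuA) (ne_of_gt hmui), hci1]
      have l2 : Real.log (mu q (insert i B) w.1 w.2) + Real.log (piq q w.1)
          = Real.log (mu q B w.1 w.2) + Real.log (mu q {i} w.1 w.2) := by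
        rw [← Real.log_mul (ne_of_gt hmuBi) (ne_of_gt hpi),
          ← Real.log_mul (ne_of_gt hmuB) (ne_of_gt hmui), hci2]
      rw [Real.log_div (ne_of_gt hmuAi) (ne_of_gt hnuAi),
        Real.log_div (ne_of_gt hmuA) (ne_of_gt hnuA),
        Real.log_div (ne_of_gt hmuBi) (ne_of_gt hnuBi),
        Real.log_div (ne_of_gt hmuB) (ne_of_gt hnuB)]
      have hr : 0 < nu q (insert i A) w.2 * nu q B w.2 /
          (nu q A w.2 * nu q (insert i B) w.2) :=
        div_pos (mul_pos hnuAi hnuB) (mul_pos hnuA hnuBi)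
      have hlog := Real.log_le_sub_one_of_pos hr
      rw [Real.log_div (ne_of_gt (mul_pos hnuAi hnuB)) (ne_of_gt (mul_pos hnuA hnuBi)),
        Real.log_mul (ne_of_gt hnuAi) (ne_of_gt hnuB),
        Real.log_mul (ne_of_gt hnuA) (ne_of_gt hnuBi)] at hlog
      linarith
  have e1 : ∑ w : σ × (ι → V),
      q w * (1 - nu q (insert i A) w.2 * nu q B w.2 /
        (nu q A w.2 * nu q (insert i B) w.2))
      = 1 - ∑ w : σ × (ι → V), q w *
          (nu q (insert i A) w.2 * nu q B w.2 / (nu q A w.2 * nu q (insert i B) w.2)) := by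
    rw [Finset.sum_congr rfl fun w _ => mul_sub (q w) 1 _, Finset.sum_sub_distrib]
    simp only [mul_one]
    rw [hq1]
  have key : 0 ≤ ∑ w : σ × (ι → V),
      q w * (Real.log (mu q (insert i A) w.1 w.2 / nu q (insert i A) w.2)
          - Real.log (mu q A w.1 w.2 / nu q A w.2)
          - Real.log (mu q (insert i B) w.1 w.2 / nu q (insert i B) w.2)
          + Real.log (mu q B w.1 w.2 / nu q B w.2)) := by
    calc (0:ℝ) ≤ ∑ w : σ × (ι → V),
          q w * (1 - nu q (insert i A) w.2 * nu q B w.2 /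
            (nu q A w.2 * nu q (insert i B) w.2)) := by
          rw [e1]; linarith
      _ ≤ _ := Finset.sum_le_sum fun w _ => hpt w
  have hexp : ∑ w : σ × (ι → V),
      q w * (Real.log (mu q (insert i A) w.1 w.2 / nu q (insert i A) w.2)
          - Real.log (mu q A w.1 w.2 / nu q A w.2)
          - Real.log (mu q (insert i B) w.1 w.2 / nu q (insert i B) w.2)
          + Real.log (mu q B w.1 w.2 / nu q B w.2))
      = (∑ w : σ × (ι → V), q w * Real.log (mu q (insert i A) w.1 w.2 / nu q (insert i A) w.2))
        - (∑ w : σ × (ι → V), q w * Real.log (mu q A w.1 w.2 / nu q A w.2))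
        - (∑ w : σ × (ι → V), q w * Real.log (mu q (insert i B) w.1 w.2 / nu q (insert i B) w.2))
        + (∑ w : σ × (ι → V), q w * Real.log (mu q B w.1 w.2 / nu q B w.2)) := by
    rw [Finset.sum_congr rfl fun w _ => (by ring :
      q w * (Real.log (mu q (insert i A) w.1 w.2 / nu q (insert i A) w.2)
          - Real.log (mu q A w.1 w.2 / nu q A w.2)
          - Real.log (mu q (insert i B) w.1 w.2 / nu q (insert i B) w.2)
          + Real.log (mu q B w.1 w.2 / nu q B w.2))
        = (q w * Real.log (mu q (insert i A) w.1 w.2 / nu q (insert i A) w.2)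
            - q w * Real.log (mu q A w.1 w.2 / nu q A w.2)
            - q w * Real.log (mu q (insert i B) w.1 w.2 / nu q (insert i B) w.2))
          + q w * Real.log (mu q B w.1 w.2 / nu q B w.2))]
    rw [Finset.sum_add_distrib, Finset.sum_sub_distrib, Finset.sum_sub_distrib]
  rw [hexp] at key
  linarith

end mainineq

end PacAux

/-- if the observations `Z_i` are conditionally independent given the hidden
state `S` (expressed multiplicatively:
`Pr(S = s, ∀ i, Z_i = v_i) · Pr(S = s)^(n-1) = ∏_i Pr(S = s, Z_i = v_i)`), then the
information gain `F(A) = H(S) - H(S | Z_A)` is submodular in `A`. -/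
theorem pac_stmt_17 {Ω ι σ V : Type*} [Fintype Ω] [Fintype ι] [DecidableEq ι]
    [Fintype σ] [DecidableEq σ] [Fintype V] [DecidableEq V]
    (p : Ω → ℝ) (hp : ∀ ω, 0 ≤ p ω) (hp1 : ∑ ω, p ω = 1)
    (S : Ω → σ) (Z : ι → Ω → V)
    (hCI : ∀ (s : σ) (v : ι → V),
      (∑ ω, if S ω = s ∧ (∀ i, Z i ω = v i) then p ω else 0) *
          rvDist p S s ^ (Fintype.card ι - 1) =
        ∏ i, ∑ ω, if S ω = s ∧ Z i ω = v i then p ω else 0)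
    (A B : Finset ι) (hAB : A ⊆ B) (i : ι) (hi : i ∉ B) :
    (rvEntropy p S - rvCondEntropy p S (fun ω (j : (insert i B : Finset ι)) => Z j ω)) -
        (rvEntropy p S - rvCondEntropy p S (fun ω (j : B) => Z j ω)) ≤
      (rvEntropy p S - rvCondEntropy p S (fun ω (j : (insert i A : Finset ι)) => Z j ω)) -
        (rvEntropy p S - rvCondEntropy p S (fun ω (j : A) => Z j ω)) := by
  classical
  set q : σ × (ι → V) → ℝ := rvDist p (fun ω => (S ω, fun i => Z i ω)) with hqdef
  have hq0 : ∀ w, 0 ≤ q w := by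
    intro w
    rw [hqdef]
    unfold rvDist
    exact Finset.sum_nonneg fun ω _ => by split_ifs; exacts [hp ω, le_rfl]
  have hq1 : ∑ w, q w = 1 := by
    rw [hqdef, PacAux.sum_rvDist p (fun ω => (S ω, fun i => Z i ω)), hp1]
  have eq1 : ∀ (s : σ) (v : ι → V),
      q (s, v) = ∑ ω, if S ω = s ∧ (∀ i, Z i ω = v i) then p ω else 0 := by
    intro s v
    rw [hqdef]
    unfold rvDist
    refine Finset.sum_congr rfl fun ω _ => if_congr ?_ rfl rfl
    simp [Prod.ext_iff, funext_iff]
  have eq2 : ∀ s : σ, PacAux.piq q s = rvDist p S s := by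
    intro s
    unfold PacAux.piq
    exact (PacAux.rvDist_comp p (fun ω => (S ω, fun i => Z i ω)) (fun w => w.1) s).symm
  have eq3 : ∀ (j : ι) (s : σ) (v : ι → V),
      PacAux.mu q {j} s v = ∑ ω, if S ω = s ∧ Z j ω = v j then p ω else 0 := by
    intro j s v
    rw [PacAux.mu_singleton]
    have h := PacAux.rvDist_comp p (fun ω => (S ω, fun i => Z i ω))
      (fun w => (w.1, w.2 j)) (s, v j)
    have h2 : rvDist p (fun ω => (S ω, Z j ω)) (s, v j)
        = ∑ ω, if S ω = s ∧ Z j ω = v j then p ω else 0 := by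
      unfold rvDist
      refine Finset.sum_congr rfl fun ω _ => if_congr ?_ rfl rfl
      simp [Prod.ext_iff]
    rw [← h2, h]
    refine Finset.sum_congr rfl fun w _ => if_congr ?_ rfl rfl
    simp [Prod.ext_iff]
  have qCI : ∀ (s : σ) (v : ι → V),
      q (s, v) * PacAux.piq q s ^ (Fintype.card ι - 1) = ∏ j, PacAux.mu q {j} s v := by
    intro s v
    rw [eq1 s v, eq2 s]
    rw [Finset.prod_congr rfl fun j _ => eq3 j s v]
    exact hCI s v
  have hmain := PacAux.main_ineq q hq0 hq1 qCI A B hAB i hi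
  rw [PacAux.condEnt_eq p S Z (insert i B), PacAux.condEnt_eq p S Z B,
    PacAux.condEnt_eq p S Z (insert i A), PacAux.condEnt_eq p S Z A]
  rw [← hqdef]
  linarith
end
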